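/- Let V be a maximal isotropic subspace with respect to ω, and let ψ₀ be a stabilizer state for V. Then for any two syndrome spinor labels (c,d) and (e,f), the syndrome states are orthogonal, ⟪σ(c,d).mulVec ψ₀, σ(e,f).mulVec ψ₀⟫ = 0, if and only if (c,d) and (e,f) lie in distinct cosets of V, i.e. (c+e, d+f) ∉ V. (Paper's main Theorem: two syndrome states are orthogonal iff the coset subspaces containing their syndrome spinors are distinguishable.) -/

import Mathlib

open Matrix BigOperators

/-- The mod-2 dot product of two bitstrings. -/
def dotp {p : ℕ} (a b : Fin p → ZMod 2) : ZMod 2 := ∑ i, a i * b i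

/-- The sign `(-1)^t` for `t : ZMod 2`. -/
noncomputable def sgn (t : ZMod 2) : ℂ := (-1 : ℂ) ^ t.val

/-- The Pauli spinor matrix `σ(a,b)`, representing `⊗ᵢ X^(a i) Z^(b i)`:
`σ(a,b) x y = (-1)^(b⬝x)` if `y = x + a` and `0` otherwise. -/
noncomputable def pauli {p : ℕ} (a b : Fin p → ZMod 2) :
    Matrix (Fin p → ZMod 2) (Fin p → ZMod 2) ℂ :=
  fun x y => if y = x + a then sgn (dotp b x) else 0

/-- The symplectic form `ω((a,b),(c,d)) = a⬝d + b⬝c` on pairs of bitstrings. -/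
def omegaF {p : ℕ} (u v : (Fin p → ZMod 2) × (Fin p → ZMod 2)) : ZMod 2 :=
  dotp u.1 v.2 + dotp u.2 v.1

/-- A subspace is isotropic if `ω` vanishes on all pairs of its elements. -/
def IsIsotropic {p : ℕ}
    (V : Submodule (ZMod 2) ((Fin p → ZMod 2) × (Fin p → ZMod 2))) : Prop :=
  ∀ u ∈ V, ∀ v ∈ V, omegaF u v = 0

/-- A maximal isotropic subspace: isotropic and not properly contained in any
isotropic subspace. -/
def IsMaxIsotropic {p : ℕ}
    (V : Submodule (ZMod 2) ((Fin p → ZMod 2) × (Fin p → ZMod 2))) : Prop :=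
  IsIsotropic V ∧ ∀ W, IsIsotropic W → V ≤ W → W = V

lemma sgn_ne_zero (t : ZMod 2) : sgn t ≠ 0 := by
  fin_cases t <;> simp [sgn]

lemma sgn_add (s t : ZMod 2) : sgn (s + t) = sgn s * sgn t := by
  rcases (by decide : ∀ z : ZMod 2, z = 0 ∨ z = 1) s with rfl | rfl <;> rcases (by decide : ∀ z : ZMod 2, z = 0 ∨ z = 1) t with rfl | rfl <;> simp [sgn, show ((1:ZMod 2) + 1) = 0 from rfl, show ZMod.val (1:ZMod 2) = 1 from rfl]

lemma conj_sgn (t : ZMod 2) : (starRingEnd ℂ) (sgn t) = sgn t := by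
  fin_cases t <;> simp [sgn]

lemma sgn_one : sgn 1 = -1 := by simp [sgn, show ZMod.val (1:ZMod 2) = 1 from rfl]

lemma sgn_mul_self (t : ZMod 2) : sgn t * sgn t = 1 := by
  rcases (by decide : ∀ z : ZMod 2, z = 0 ∨ z = 1) t with rfl | rfl <;> simp [sgn, show ZMod.val (1:ZMod 2) = 1 from rfl]

lemma dotp_add_right {p : ℕ} (a x y : Fin p → ZMod 2) :
    dotp a (x + y) = dotp a x + dotp a y := by
  simp [dotp, mul_add, Finset.sum_add_distrib]

lemma dotp_add_left {p : ℕ} (a b x : Fin p → ZMod 2) :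
    dotp (a + b) x = dotp a x + dotp b x := by
  simp [dotp, add_mul, Finset.sum_add_distrib]

lemma dotp_comm {p : ℕ} (a b : Fin p → ZMod 2) : dotp a b = dotp b a := by
  simp [dotp, mul_comm]

lemma add_self_bv {p : ℕ} (v : Fin p → ZMod 2) : v + v = 0 := by
  funext i
  exact CharTwo.add_self_eq_zero (v i)

lemma z2_add_add (s t : ZMod 2) : s + t + t = s := by
  rw [add_assoc, CharTwo.add_self_eq_zero, add_zero]

lemma pauli_mulVec {p : ℕ} (a b : Fin p → ZMod 2) (ψ : (Fin p → ZMod 2) → ℂ)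
    (x : Fin p → ZMod 2) :
    (pauli a b).mulVec ψ x = sgn (dotp b x) * ψ (x + a) := by
  simp [Matrix.mulVec, dotProduct, pauli, ite_mul, Finset.sum_ite_eq']

lemma omegaF_add_left {p : ℕ} (u v w : (Fin p → ZMod 2) × (Fin p → ZMod 2)) :
    omegaF (u + v) w = omegaF u w + omegaF v w := by
  simp only [omegaF, Prod.fst_add, Prod.snd_add, dotp_add_left]
  ring

lemma omegaF_comm {p : ℕ} (u v : (Fin p → ZMod 2) × (Fin p → ZMod 2)) :
    omegaF u v = omegaF v u := by
  simp only [omegaF, dotp_comm]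
  ring

lemma omegaF_add_right {p : ℕ} (u v w : (Fin p → ZMod 2) × (Fin p → ZMod 2)) :
    omegaF u (v + w) = omegaF u v + omegaF u w := by
  rw [omegaF_comm, omegaF_add_left, omegaF_comm v u, omegaF_comm w u]

lemma omegaF_self {p : ℕ} (u : (Fin p → ZMod 2) × (Fin p → ZMod 2)) :
    omegaF u u = 0 := by
  simp only [omegaF, dotp_comm]
  exact CharTwo.add_self_eq_zero _

lemma exists_anticommute {p : ℕ}
    (V : Submodule (ZMod 2) ((Fin p → ZMod 2) × (Fin p → ZMod 2)))
    (hV : IsMaxIsotropic V) {w : (Fin p → ZMod 2) × (Fin p → ZMod 2)}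
    (hw : w ∉ V) : ∃ u ∈ V, omegaF u w = 1 := by
  by_contra hcon
  push_neg at hcon
  have hz : ∀ z : ZMod 2, z ≠ 1 → z = 0 := by decide
  have h0 : ∀ u ∈ V, omegaF u w = 0 := fun u hu => hz _ (hcon u hu)
  have hsm : ∀ s : ZMod 2, s • w = 0 ∨ s • w = w := by
    intro s
    have hcas : ∀ z : ZMod 2, z = 0 ∨ z = 1 := by decide
    rcases hcas s with rfl | rfl
    · left; exact zero_smul _ _
    · right; exact one_smul _ _
  have hWiso : IsIsotropic (V ⊔ (ZMod 2) ∙ w) := by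
    intro u hu v hv
    rw [Submodule.mem_sup] at hu hv
    obtain ⟨u1, hu1, u2, hu2, rfl⟩ := hu
    obtain ⟨v1, hv1, v2, hv2, rfl⟩ := hv
    rw [Submodule.mem_span_singleton] at hu2 hv2
    obtain ⟨s, rfl⟩ := hu2
    obtain ⟨t, rfl⟩ := hv2
    rcases hsm s with h1 | h1 <;> rcases hsm t with h2 | h2 <;> rw [h1, h2]
    · simpa using hV.1 u1 hu1 v1 hv1
    · rw [add_zero, omegaF_add_right, hV.1 u1 hu1 v1 hv1, h0 u1 hu1, add_zero]
    · rw [add_zero, omegaF_add_left, hV.1 u1 hu1 v1 hv1, omegaF_comm w v1, h0 v1 hv1, add_zero]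
    · rw [omegaF_add_left, omegaF_add_right, omegaF_add_right, hV.1 u1 hu1 v1 hv1,
        h0 u1 hu1, omegaF_comm w v1, h0 v1 hv1, omegaF_self]
      ring
  have hWeq := hV.2 _ hWiso le_sup_left
  apply hw
  rw [← hWeq]
  exact Submodule.mem_sup_right (Submodule.mem_span_singleton_self w)

lemma inner_pauli_eq_zero_iff {p : ℕ}
    (V : Submodule (ZMod 2) ((Fin p → ZMod 2) × (Fin p → ZMod 2)))
    (hV : IsMaxIsotropic V) (ψ₀ : (Fin p → ZMod 2) → ℂ) (hψ₀ : ψ₀ ≠ 0)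
    (hstab : ∀ u ∈ V, (pauli u.1 u.2).mulVec ψ₀ = ψ₀)
    (g h : Fin p → ZMod 2) :
    (∑ x, (starRingEnd ℂ) (ψ₀ x) * (sgn (dotp h x) * ψ₀ (x + g))) = 0 ↔ (g, h) ∉ V := by
  constructor
  · intro hzero hmem
    have hpt : ∀ x, sgn (dotp h x) * ψ₀ (x + g) = ψ₀ x := by
      intro x
      have := congrFun (hstab (g, h) hmem) x
      rwa [pauli_mulVec] at this
    rw [Finset.sum_congr rfl (fun x _ => by rw [hpt x])] at hzero
    have hns : ∀ x : Fin p → ZMod 2,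
        (starRingEnd ℂ) (ψ₀ x) * ψ₀ x = (Complex.normSq (ψ₀ x) : ℂ) := by
      intro x; rw [mul_comm, Complex.mul_conj]
    rw [Finset.sum_congr rfl (fun x _ => hns x), ← Complex.ofReal_sum,
      Complex.ofReal_eq_zero] at hzero
    have hall := (Finset.sum_eq_zero_iff_of_nonneg
      (fun x _ => Complex.normSq_nonneg (ψ₀ x))).1 hzero
    apply hψ₀
    funext x
    exact Complex.normSq_eq_zero.1 (hall x (Finset.mem_univ x))
  · intro hnot
    obtain ⟨⟨a, b⟩, hab, hω⟩ := exists_anticommute V hV hnot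
    have hpt : ∀ x, ψ₀ x = sgn (dotp b x) * ψ₀ (x + a) := by
      intro x
      have := congrFun (hstab (a, b) hab) x
      rw [pauli_mulVec] at this
      exact this.symm
    set S := ∑ x, (starRingEnd ℂ) (ψ₀ x) * (sgn (dotp h x) * ψ₀ (x + g)) with hS
    have e4 : sgn (dotp b g) * sgn (dotp h a) = -1 := by
      rw [← sgn_add]
      have : dotp b g + dotp h a = 1 := by
        rw [dotp_comm h a, add_comm]
        exact hω
      rw [this, sgn_one]
    have key : S = -S := by
      calc S = ∑ x, (-1 : ℂ) *
            ((starRingEnd ℂ) (ψ₀ (x + a)) * (sgn (dotp h (x + a)) * ψ₀ (x + a + g))) := by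
            rw [hS]
            apply Finset.sum_congr rfl
            intro x _
            rw [hpt x, hpt (x + g), _root_.map_mul, conj_sgn,
              show x + g + a = x + a + g from add_right_comm x g a]
            have e2 : sgn (dotp b (x + g)) = sgn (dotp b x) * sgn (dotp b g) := by
              rw [dotp_add_right, sgn_add]
            have e3 : sgn (dotp h x) = sgn (dotp h (x + a)) * sgn (dotp h a) := by
              rw [dotp_add_right, sgn_add, mul_assoc, sgn_mul_self, mul_one]
            rw [e2, e3]
            linear_combination ((starRingEnd ℂ) (ψ₀ (x + a)) * sgn (dotp h (x + a)) *
                ψ₀ (x + a + g) * sgn (dotp b g) * sgn (dotp h a)) * sgn_mul_self (dotp b x) +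
              ((starRingEnd ℂ) (ψ₀ (x + a)) * sgn (dotp h (x + a)) * ψ₀ (x + a + g)) * e4
      _ = -1 * ∑ x, (starRingEnd ℂ) (ψ₀ (x + a)) *
            (sgn (dotp h (x + a)) * ψ₀ (x + a + g)) := by
            rw [← Finset.mul_sum]
      _ = -S := by
            have hre := Equiv.sum_comp (Equiv.addRight a)
              (fun y => (starRingEnd ℂ) (ψ₀ y) * (sgn (dotp h y) * ψ₀ (y + g)))
            simp only [Equiv.coe_addRight] at hre
            rw [hre, ← hS]
            ring
    have h2 : (2 : ℂ) * S = 0 := by linear_combination key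
    rcases mul_eq_zero.1 h2 with h' | h'
    · norm_num at h'
    · exact h'

/-- Paper's main Theorem: For a stabilizer state `ψ₀` of a maximal
isotropic subspace `V`, two syndrome states `σ(c,d).mulVec ψ₀` and `σ(e,f).mulVec ψ₀`
are orthogonal iff `(c,d)` and `(e,f)` lie in distinct cosets of `V`, i.e.
`(c+e, d+f) ∉ V`. -/
theorem syndrome_orthogonal_iff {p : ℕ} (hp : 1 ≤ p)
    (V : Submodule (ZMod 2) ((Fin p → ZMod 2) × (Fin p → ZMod 2)))
    (hV : IsMaxIsotropic V) (ψ₀ : (Fin p → ZMod 2) → ℂ) (hψ₀ : ψ₀ ≠ 0)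
    (hstab : ∀ u ∈ V, (pauli u.1 u.2).mulVec ψ₀ = ψ₀)
    (c d e f : Fin p → ZMod 2) :
    (∑ x, (starRingEnd ℂ) ((pauli c d).mulVec ψ₀ x) * (pauli e f).mulVec ψ₀ x) = 0 ↔
      (c + e, d + f) ∉ V := by
  have hLHS : (∑ x, (starRingEnd ℂ) ((pauli c d).mulVec ψ₀ x) * (pauli e f).mulVec ψ₀ x)
      = sgn (dotp (d + f) c) *
        ∑ x, (starRingEnd ℂ) (ψ₀ x) * (sgn (dotp (d + f) x) * ψ₀ (x + (c + e))) := by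
    rw [Finset.mul_sum]
    rw [← Equiv.sum_comp (Equiv.addRight c)
      (fun x => (starRingEnd ℂ) ((pauli c d).mulVec ψ₀ x) * (pauli e f).mulVec ψ₀ x)]
    apply Finset.sum_congr rfl
    intro x _
    simp only [Equiv.coe_addRight, pauli_mulVec, _root_.map_mul, conj_sgn]
    rw [show x + c + c = x from by rw [add_assoc, add_self_bv, add_zero]]
    rw [show x + c + e = x + (c + e) from add_assoc x c e]
    have e1 : sgn (dotp d (x + c)) = sgn (dotp d x) * sgn (dotp d c) := by
      rw [dotp_add_right, sgn_add]
    have e2 : sgn (dotp f (x + c)) = sgn (dotp f x) * sgn (dotp f c) := by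
      rw [dotp_add_right, sgn_add]
    have e3 : sgn (dotp (d + f) x) = sgn (dotp d x) * sgn (dotp f x) := by
      rw [dotp_add_left, sgn_add]
    have e4 : sgn (dotp (d + f) c) = sgn (dotp d c) * sgn (dotp f c) := by
      rw [dotp_add_left, sgn_add]
    rw [e1, e2, e3, e4]
    ring
  rw [hLHS, mul_eq_zero]
  have hkey := inner_pauli_eq_zero_iff V hV ψ₀ hψ₀ hstab (c + e) (d + f)
  constructor
  · rintro (h | h)
    · exact absurd h (sgn_ne_zero _)
    · exact hkey.1 h
  · intro h
    exact Or.inr (hkey.2 h)
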